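/- For sufficiently small η₀ > 0 there exists C > 0 such that for all t ≥ 0 and all f₁, f₂ ∈ Y₁: ‖e^{t𝒜_*}(f₁,f₂)ᵀ − (1/2)(H_{2t} * W_{4t} * f₁)·e₂‖_{L^∞×L^∞} ≤ C⟨t⟩^{−1/2}(‖f₁‖_{Y₁} + ‖f₂‖_{Y₁}), where * denotes convolution on ℝ. -/

import Mathlib

open MeasureTheory
open scoped ENNReal NNReal

noncomputable section

/-- The Japanese bracket `⟨x⟩ = √(1+x²)`. -/
def jb (x : ℝ) : ℝ := Real.sqrt (1 + x ^ 2)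

/-- `μ₃ = 1/2 + π²/24`. -/
def mu3 : ℝ := 1 / 2 + Real.pi ^ 2 / 24

/-- `ω(η) = √(16 + (8μ₃ − 1)η²)`. -/
def omg (η : ℝ) : ℝ := Real.sqrt (16 + (8 * mu3 - 1) * η ^ 2)

/-- The `(1,1)` entry of the matrix exponential `e^{t𝒜_*(η)}`. -/
def E11 (t η : ℝ) : ℝ :=
  Real.exp (-2 * t * η ^ 2) *
    (Real.cos (t * η * omg η) - η / omg η * Real.sin (t * η * omg η))

/-- The `(1,2)` entry of the matrix exponential `e^{t𝒜_*(η)}`. -/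
def E12 (t η : ℝ) : ℝ :=
  Real.exp (-2 * t * η ^ 2) * (-(8 * η / omg η) * Real.sin (t * η * omg η))

/-- The `(2,1)` entry of the matrix exponential `e^{t𝒜_*(η)}`. -/
def E21 (t η : ℝ) : ℝ :=
  Real.exp (-2 * t * η ^ 2) *
    ((η ^ 2 + omg η ^ 2) / (8 * η * omg η) * Real.sin (t * η * omg η))

/-- The `(2,2)` entry of the matrix exponential `e^{t𝒜_*(η)}`. -/
def E22 (t η : ℝ) : ℝ :=
  Real.exp (-2 * t * η ^ 2) *
    (Real.cos (t * η * omg η) + η / omg η * Real.sin (t * η * omg η))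

/-- Inverse Fourier transform, `ℱ⁻¹g(y) = (2π)^{-1/2} ∫ g(η) e^{iyη} dη`. -/
def invF (g : ℝ → ℂ) (y : ℝ) : ℂ :=
  ((Real.sqrt (2 * Real.pi) : ℝ) : ℂ)⁻¹ *
    ∫ η : ℝ, g η * Complex.exp (Complex.I * ((η * y : ℝ) : ℂ))

/-- `g` is the Fourier transform of an element of `Y`: `g ∈ L²` and `g` is supported
in `[-η₀, η₀]`.  The corresponding element of `Y` is `f = ℱ⁻¹g = invF g`. -/
def MemYhat (η₀ : ℝ) (g : ℝ → ℂ) : Prop :=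
  MemLp g 2 volume ∧ ∀ η : ℝ, η₀ < |η| → g η = 0

/-- The `Y₁` norm of `f = invF g`, namely `‖f̂‖_{L^∞} = ‖g‖_{L^∞}`. -/
def Y1norm (g : ℝ → ℂ) : ℝ := (eLpNorm g ⊤ volume).toReal

/-- The `L²(ℝ)` norm of a complex-valued function. -/
def L2norm (f : ℝ → ℂ) : ℝ := Real.sqrt (∫ y : ℝ, ‖f y‖ ^ 2)

/-- The first component of `e^{t𝒜_*}(f₁,f₂)ᵀ`, where `f_i = invF g_i`. -/
def row1 (t : ℝ) (g₁ g₂ : ℝ → ℂ) : ℝ → ℂ :=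
  invF fun η => (E11 t η : ℂ) * g₁ η + (E12 t η : ℂ) * g₂ η

/-- The second component of `e^{t𝒜_*}(f₁,f₂)ᵀ`, where `f_i = invF g_i`. -/
def row2 (t : ℝ) (g₁ g₂ : ℝ → ℂ) : ℝ → ℂ :=
  invF fun η => (E21 t η : ℂ) * g₁ η + (E22 t η : ℂ) * g₂ η

/-- The heat kernel `H_t(y) = (4πt)^{-1/2} e^{-y²/(4t)}`. -/
def Hker (t y : ℝ) : ℝ := (Real.sqrt (4 * Real.pi * t))⁻¹ * Real.exp (-y ^ 2 / (4 * t))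

/-- `W_t = (1/2)·1_{[-t,t]}`. -/
def Wfun (t : ℝ) : ℝ → ℝ := Set.indicator (Set.Icc (-t) t) fun _ => (1 : ℝ) / 2

/-- The double convolution `(H_{2t} * W_{4t} * f)(y)`. -/
def convHW (t : ℝ) (f : ℝ → ℂ) (y : ℝ) : ℂ :=
  ∫ z : ℝ, ∫ w : ℝ, ((Hker (2 * t) (y - z) * Wfun (4 * t) (z - w) : ℝ) : ℂ) * f w

/-- The shifted heat convolution `(H_{2t}(· + a) * f)(y)`. -/
def convH (t a : ℝ) (f : ℝ → ℂ) (y : ℝ) : ℂ :=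
  ∫ w : ℝ, ((Hker (2 * t) (y - w + a) : ℝ) : ℂ) * f w


-- ===== auxiliary lemmas =====

lemma mu3_lb : (1:ℝ)/2 ≤ mu3 := by
  unfold mu3; nlinarith [sq_nonneg Real.pi]

lemma mu3_ub : mu3 ≤ 1 := by
  have h := Real.pi_lt_d2
  have h0 := Real.pi_pos
  unfold mu3; nlinarith

lemma omg_sq (η : ℝ) : omg η ^ 2 = 16 + (8 * mu3 - 1) * η ^ 2 := by
  unfold omg
  rw [Real.sq_sqrt]
  nlinarith [mu3_lb, sq_nonneg η]

lemma omg_ge (η : ℝ) : 4 ≤ omg η := by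
  have h := omg_sq η
  have h2 := Real.sqrt_nonneg (16 + (8 * mu3 - 1) * η ^ 2)
  have h3 : Real.sqrt (16 + (8 * mu3 - 1) * η ^ 2) = omg η := rfl
  nlinarith [mu3_lb, sq_nonneg η]

lemma omg_pos (η : ℝ) : 0 < omg η := lt_of_lt_of_le (by norm_num) (omg_ge η)

lemma omg_sub_le (η : ℝ) : omg η - 4 ≤ η ^ 2 := by
  have h1 := omg_sq η
  have h2 := omg_ge η
  have h3 := mu3_ub
  nlinarith [sq_nonneg η, sq_nonneg (η^2)]

lemma sin_lip (a b : ℝ) : |Real.sin a - Real.sin b| ≤ |a - b| := by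
  rw [Real.sin_sub_sin, abs_mul, abs_mul]
  have h1 := Real.abs_sin_le_abs (x := (a-b)/2)
  have h2 := Real.abs_cos_le_one ((a+b)/2)
  have h3 : |(a-b)/2| = |a-b|/2 := by rw [abs_div]; norm_num
  have h4 : |(2:ℝ)| = 2 := by norm_num
  have h5 := abs_nonneg (Real.sin ((a-b)/2))
  have h6 := abs_nonneg (a - b)
  rw [h4]
  nlinarith

def msym (t η : ℝ) : ℝ := Real.exp (-2 * t * η ^ 2) * (Real.sin (4 * t * η) / (2 * η))


lemma exp_two_le (t η : ℝ) (ht : 0 ≤ t) :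
    Real.exp (-2 * t * η ^ 2) ≤ Real.exp (-(t * η ^ 2)) :=
  Real.exp_le_exp.2 (by nlinarith [sq_nonneg η])

lemma abs_q_le (η : ℝ) (hη : |η| ≤ 1) : |η / omg η| ≤ 1 := by
  rw [abs_div, abs_of_pos (omg_pos η), div_le_one (omg_pos η)]
  linarith [omg_ge η]

lemma abs_E11_le (t η : ℝ) (ht : 0 ≤ t) (hη : |η| ≤ 1) :
    |E11 t η| ≤ 2 * Real.exp (-(t * η ^ 2)) := by
  unfold E11
  rw [abs_mul, Real.abs_exp]
  have hc := Real.abs_cos_le_one (t * η * omg η)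
  have hs := Real.abs_sin_le_one (t * η * omg η)
  have hq := abs_q_le η hη
  have h1 : |Real.cos (t * η * omg η) - η / omg η * Real.sin (t * η * omg η)| ≤ 2 := by
    have h2 : |η / omg η * Real.sin (t * η * omg η)| ≤ 1 := by
      rw [abs_mul]
      nlinarith [abs_nonneg (η / omg η), abs_nonneg (Real.sin (t * η * omg η))]
    calc |Real.cos (t * η * omg η) - η / omg η * Real.sin (t * η * omg η)|
        ≤ |Real.cos (t * η * omg η)| + |η / omg η * Real.sin (t * η * omg η)| := abs_sub _ _
      _ ≤ 2 := by linarith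
  have he := exp_two_le t η ht
  have he0 := Real.exp_pos (-2 * t * η ^ 2)
  nlinarith

lemma abs_E12_le (t η : ℝ) (ht : 0 ≤ t) (hη : |η| ≤ 1) :
    |E12 t η| ≤ 2 * Real.exp (-(t * η ^ 2)) := by
  unfold E12
  rw [abs_mul, Real.abs_exp]
  have hs := Real.abs_sin_le_one (t * η * omg η)
  have h1 : |(-(8 * η / omg η)) * Real.sin (t * η * omg η)| ≤ 2 := by
    rw [abs_mul, abs_neg]
    have h2 : |8 * η / omg η| ≤ 2 := by
      rw [abs_div, abs_of_pos (omg_pos η), div_le_iff₀ (omg_pos η), abs_mul]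
      have : |(8:ℝ)| = 8 := by norm_num
      rw [this]
      nlinarith [omg_ge η, abs_nonneg η]
    nlinarith [abs_nonneg (8 * η / omg η), abs_nonneg (Real.sin (t * η * omg η))]
  have he := exp_two_le t η ht
  have he0 := Real.exp_pos (-2 * t * η ^ 2)
  nlinarith

lemma abs_E22_le (t η : ℝ) (ht : 0 ≤ t) (hη : |η| ≤ 1) :
    |E22 t η| ≤ 2 * Real.exp (-(t * η ^ 2)) := by
  unfold E22
  rw [abs_mul, Real.abs_exp]
  have hc := Real.abs_cos_le_one (t * η * omg η)
  have h1 : |Real.cos (t * η * omg η) + η / omg η * Real.sin (t * η * omg η)| ≤ 2 := by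
    have h2 : |η / omg η * Real.sin (t * η * omg η)| ≤ 1 := by
      rw [abs_mul]
      nlinarith [abs_nonneg (η / omg η), abs_nonneg (Real.sin (t * η * omg η)),
        abs_q_le η hη, Real.abs_sin_le_one (t * η * omg η)]
    calc |Real.cos (t * η * omg η) + η / omg η * Real.sin (t * η * omg η)|
        ≤ |Real.cos (t * η * omg η)| + |η / omg η * Real.sin (t * η * omg η)| := abs_add_le _ _
      _ ≤ 2 := by linarith
  have he := exp_two_le t η ht
  have he0 := Real.exp_pos (-2 * t * η ^ 2)
  nlinarith

lemma abs_msym_le (t η : ℝ) (ht : 0 ≤ t) : |msym t η| ≤ 2 * t := by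
  unfold msym
  rw [abs_mul, Real.abs_exp]
  rcases eq_or_ne η 0 with rfl | hη
  · simp
    try positivity
  · have h1 : |Real.sin (4 * t * η) / (2 * η)| ≤ 2 * t := by
      rw [abs_div, div_le_iff₀ (by positivity : (0:ℝ) < |2 * η|)]
      calc |Real.sin (4 * t * η)| ≤ |4 * t * η| := Real.abs_sin_le_abs
        _ = 4 * t * |η| := by rw [abs_mul, abs_mul]; simp [abs_of_nonneg ht]
        _ ≤ 2 * t * |2 * η| := by rw [abs_mul]; simp; nlinarith [abs_nonneg η]
    have he : Real.exp (-2 * t * η ^ 2) ≤ 1 := by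
      rw [Real.exp_le_one_iff]
      nlinarith [sq_nonneg η]
    have h0 := abs_nonneg (Real.sin (4 * t * η) / (2 * η))
    nlinarith [Real.exp_pos (-2 * t * η ^ 2)]

set_option maxHeartbeats 1000000 in
lemma abs_E21_sub_le (t η : ℝ) (ht : 0 ≤ t) (hη : |η| ≤ 1) :
    |E21 t η - msym t η| ≤ 2 * Real.exp (-(t * η ^ 2)) := by
  rcases eq_or_ne η 0 with rfl | hη0
  · simp [E21, msym]
    try positivity
  · have hw4 := omg_ge η
    have hwpos := omg_pos η
    have hsub := omg_sub_le η
    have hsub0 : 0 ≤ omg η - 4 := by linarith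
    set w := omg η with hw
    set S := Real.sin (t * η * w) with hS
    set S' := Real.sin (4 * t * η) with hS'
    have hS1 : |S| ≤ 1 := Real.abs_sin_le_one _
    have key : E21 t η - msym t η
        = Real.exp (-2 * t * η ^ 2) *
          (η / (8 * w) * S + (w - 4) / (8 * η) * S + (S - S') / (2 * η)) := by
      unfold E21 msym
      rw [← hS, ← hS', ← hw, ← mul_sub]
      congr 1
      field_simp
      ring
    rw [key, abs_mul, Real.abs_exp]
    have habs : 0 < |η| := abs_pos.2 hη0
    have e1 : |η / (8 * w) * S| ≤ 1/8 := by
      rw [abs_mul, abs_div]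
      have h8 : |8 * w| = 8 * w := abs_of_pos (by linarith)
      rw [h8]
      have : |η| / (8 * w) ≤ 1/8 := by
        rw [div_le_iff₀ (by linarith : (0:ℝ) < 8 * w)]
        nlinarith
      nlinarith [abs_nonneg η, div_nonneg (abs_nonneg η) (by linarith : (0:ℝ) ≤ 8*w)]
    have e2 : |(w - 4) / (8 * η) * S| ≤ 1/8 := by
      rw [abs_mul, abs_div, abs_of_nonneg hsub0]
      have h8 : |8 * η| = 8 * |η| := by rw [abs_mul]; norm_num
      rw [h8]
      have hb : (w - 4) / (8 * |η|) ≤ 1/8 := by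
        rw [div_le_iff₀ (by positivity : (0:ℝ) < 8 * |η|)]
        nlinarith [sq_abs η]
      nlinarith [div_nonneg hsub0 (by positivity : (0:ℝ) ≤ 8 * |η|)]
    have e3 : |(S - S') / (2 * η)| ≤ t * η ^ 2 / 2 := by
      rw [abs_div]
      have hSd : |S - S'| ≤ t * |η| * (w - 4) := by
        have h := sin_lip (t * η * w) (4 * t * η)
        rw [← hS, ← hS'] at h
        calc |S - S'| ≤ |t * η * w - 4 * t * η| := h
          _ = |t * η| * |w - 4| := by rw [← abs_mul]; ring_nf
          _ = t * |η| * (w - 4) := by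
              rw [abs_mul, abs_of_nonneg ht, abs_of_nonneg hsub0]
      have h2η : |2 * η| = 2 * |η| := by rw [abs_mul]; norm_num
      rw [h2η, div_le_iff₀ (by positivity : (0:ℝ) < 2 * |η|)]
      calc |S - S'| ≤ t * |η| * (w - 4) := hSd
        _ ≤ t * |η| * η ^ 2 := by nlinarith [mul_nonneg ht (abs_nonneg η)]
        _ = t * η ^ 2 / 2 * (2 * |η|) := by ring
    have hsum : |η / (8 * w) * S + (w - 4) / (8 * η) * S + (S - S') / (2 * η)|
        ≤ 1/4 + t * η ^ 2 / 2 := by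
      calc |η / (8 * w) * S + (w - 4) / (8 * η) * S + (S - S') / (2 * η)|
          ≤ |η / (8 * w) * S + (w - 4) / (8 * η) * S| + |(S - S') / (2 * η)| := abs_add_le _ _
        _ ≤ |η / (8 * w) * S| + |(w - 4) / (8 * η) * S| + |(S - S') / (2 * η)| := by
            linarith [abs_add_le (η / (8 * w) * S) ((w - 4) / (8 * η) * S)]
        _ ≤ 1/4 + t * η ^ 2 / 2 := by linarith
    -- final: exp(-2s)(1/4 + s/2) ≤ 2 exp(-s) with s = t η²
    set s := t * η ^ 2 with hs
    have hs0 : 0 ≤ s := by positivity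
    have hee : Real.exp (-2 * t * η ^ 2) = Real.exp (-s) * Real.exp (-s) := by
      rw [← Real.exp_add]; congr 1; rw [hs]; ring
    have hp1 : Real.exp (-s) ≤ 1 := by rw [Real.exp_le_one_iff]; linarith
    have hsp : s * Real.exp (-s) ≤ 1 := by
      rw [Real.exp_neg]
      rw [mul_inv_le_iff₀ (Real.exp_pos s)]
      nlinarith [Real.add_one_le_exp s]
    have hp0 := Real.exp_pos (-s)
    rw [hee]
    have final : ∀ p s' X : ℝ, 0 < p → p ≤ 1 → s' * p ≤ 1 → 0 ≤ X → X ≤ 1/4 + s'/2 →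
        p * p * X ≤ 2 * p := by
      intro p s' X hp hple hsple hX0 hX
      nlinarith [mul_le_mul_of_nonneg_left (mul_le_mul_of_nonneg_left hX hp.le) hp.le,
        mul_le_mul_of_nonneg_left hple hp.le, mul_le_mul_of_nonneg_left hsple hp.le]
    exact final _ _ _ hp0 hp1 hsp (abs_nonneg _) hsum
lemma jb_pos (t : ℝ) : 0 < jb t := Real.sqrt_pos.2 (by positivity)

lemma norm_cexp_I_mul (r : ℝ) : ‖Complex.exp (Complex.I * (r : ℂ))‖ = 1 := by
  rw [Complex.norm_exp]
  simp [Complex.mul_re]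

lemma norm_invF_le (h : ℝ → ℂ) (y : ℝ) :
    ‖invF h y‖ ≤ (Real.sqrt (2 * Real.pi))⁻¹ * ∫ η : ℝ, ‖h η‖ := by
  unfold invF
  rw [norm_mul]
  have h1 : ‖(((Real.sqrt (2 * Real.pi) : ℝ) : ℂ))⁻¹‖ = (Real.sqrt (2 * Real.pi))⁻¹ := by
    rw [norm_inv, Complex.norm_real, Real.norm_eq_abs, abs_of_nonneg (Real.sqrt_nonneg _)]
  rw [h1]
  refine mul_le_mul_of_nonneg_left ?_ (by positivity)
  refine (norm_integral_le_integral_norm _).trans (le_of_eq ?_)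
  refine integral_congr_ae (Filter.Eventually.of_forall fun η => ?_)
  show ‖h η * Complex.exp (Complex.I * ((η * y : ℝ) : ℂ))‖ = ‖h η‖
  rw [norm_mul, norm_cexp_I_mul, mul_one]

lemma gauss_int_le (t η₀ : ℝ) (ht : 0 ≤ t) (h0 : 0 < η₀) (h1 : η₀ ≤ 1) :
    ∫ η in Set.Icc (-η₀) η₀, Real.exp (-(t * η ^ 2)) ≤ 3 * jb t ^ (-(1/2) : ℝ) := by
  have hjb1 : 1 ≤ jb t := by
    have h2 := Real.sq_sqrt (show (0:ℝ) ≤ 1 + t^2 by positivity)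
    have h3 := Real.sqrt_nonneg (1 + t^2)
    rw [jb]; nlinarith [sq_nonneg t]
  have hjbpos : (0:ℝ) < jb t := by linarith
  rcases le_total t 1 with hc | hc
  · have hIle : ∫ η in Set.Icc (-η₀) η₀, Real.exp (-(t * η ^ 2)) ≤ 2 * η₀ := by
      have hmono : ∫ η in Set.Icc (-η₀) η₀, Real.exp (-(t * η ^ 2))
          ≤ ∫ _η in Set.Icc (-η₀) η₀, (1:ℝ) := by
        refine setIntegral_mono_on ?_ ?_ measurableSet_Icc fun η _ => ?_
        · exact (Real.continuous_exp.comp (by continuity)).continuousOn.integrableOn_compact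
            isCompact_Icc
        · exact integrableOn_const measure_Icc_lt_top.ne
        · rw [Real.exp_le_one_iff]
          nlinarith [sq_nonneg η]
      have hconst : ∫ _η in Set.Icc (-η₀) η₀, (1:ℝ) = 2 * η₀ := by
        simp [Real.volume_Icc, sub_neg_eq_add]
        rw [max_eq_left (by linarith)]
        ring
      linarith
    have hjb2 : jb t ≤ 2 := by
      have h2 := Real.sq_sqrt (show (0:ℝ) ≤ 1 + t^2 by positivity)
      have h3 := Real.sqrt_nonneg (1 + t^2)
      rw [jb]; nlinarith
    have hr : (2:ℝ)/3 ≤ jb t ^ (-(1/2) : ℝ) := by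
      have h2 : (2:ℝ) ^ (-(1/2):ℝ) ≤ jb t ^ (-(1/2):ℝ) :=
        Real.rpow_le_rpow_of_nonpos hjbpos hjb2 (by norm_num)
      have h3 : (2:ℝ) ^ (-(1/2):ℝ) = (Real.sqrt 2)⁻¹ := by
        rw [Real.rpow_neg (by norm_num), Real.sqrt_eq_rpow]
      have h4 : (2:ℝ)/3 ≤ (Real.sqrt 2)⁻¹ := by
        rw [le_inv_comm₀ (by norm_num) (Real.sqrt_pos.2 (by norm_num))]
        nlinarith [Real.sq_sqrt (by norm_num : (0:ℝ) ≤ 2), Real.sqrt_nonneg 2]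
      linarith [h3 ▸ h2]
    linarith
  · have hint : Integrable (fun η : ℝ => Real.exp (-(t * η ^ 2))) := by
      simp_rw [← neg_mul]
      exact integrable_exp_neg_mul_sq (by linarith : (0:ℝ) < t)
    have hIle : ∫ η in Set.Icc (-η₀) η₀, Real.exp (-(t * η ^ 2))
        ≤ ∫ η : ℝ, Real.exp (-(t * η ^ 2)) :=
      setIntegral_le_integral hint (Filter.Eventually.of_forall fun η => (Real.exp_pos _).le)
    have hgauss : ∫ η : ℝ, Real.exp (-(t * η ^ 2)) = Real.sqrt (Real.pi / t) := by
      simp_rw [← neg_mul]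
      exact integral_gaussian t
    have htpos : (0:ℝ) < t := by linarith
    have hrw : jb t ^ (-(1/2):ℝ) = (Real.sqrt (jb t))⁻¹ := by
      rw [Real.rpow_neg hjbpos.le, Real.sqrt_eq_rpow]
    have hjble : jb t ≤ 2 * t := by
      have h2 := Real.sq_sqrt (show (0:ℝ) ≤ 1 + t^2 by positivity)
      have h3 := Real.sqrt_nonneg (1 + t^2)
      rw [jb]; nlinarith
    have hkey : Real.sqrt (Real.pi / t) ≤ 3 * (Real.sqrt (jb t))⁻¹ := by
      rw [← div_eq_mul_inv, le_div_iff₀ (Real.sqrt_pos.2 hjbpos),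
        ← Real.sqrt_mul (by positivity) (jb t)]
      have hle9 : Real.pi / t * jb t ≤ 9 := by
        have e1 : Real.pi / t * jb t ≤ Real.pi / t * (2 * t) :=
          mul_le_mul_of_nonneg_left hjble (by positivity)
        have e2 : Real.pi / t * (2 * t) = 2 * Real.pi := by field_simp
        nlinarith [Real.pi_le_four]
      calc Real.sqrt (Real.pi / t * jb t) ≤ Real.sqrt 9 := Real.sqrt_le_sqrt hle9
        _ = 3 := by rw [show (9:ℝ) = 3^2 by norm_num, Real.sqrt_sq (by norm_num)]
    rw [hrw]
    linarith

lemma not_mem_Icc_abs {η₀ η : ℝ} (h : η ∉ Set.Icc (-η₀) η₀) : η₀ < |η| := by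
  rw [Set.mem_Icc, not_and_or, not_le, not_le] at h
  rcases h with h | h
  · exact lt_abs.2 (Or.inr (by linarith))
  · exact lt_abs.2 (Or.inl h)

lemma ae_norm_le_Y1 (g : ℝ → ℂ) (hg : eLpNorm g ⊤ volume < ⊤) :
    ∀ᵐ η : ℝ, ‖g η‖ ≤ Y1norm g := by
  have h := ae_le_eLpNormEssSup (f := g) (μ := (volume : Measure ℝ))
  filter_upwards [h] with η hη
  have hfin : eLpNormEssSup g volume ≠ ⊤ := by
    rw [← eLpNorm_exponent_top]; exact hg.ne
  have h2 : (‖g η‖₊ : ℝ≥0∞).toReal ≤ (eLpNormEssSup g volume).toReal :=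
    ENNReal.toReal_mono hfin (by exact_mod_cast hη)
  simpa [Y1norm, eLpNorm_exponent_top] using h2

lemma Y1norm_nonneg (g : ℝ → ℂ) : 0 ≤ Y1norm g := ENNReal.toReal_nonneg

lemma memYhat_integrable {η₀ : ℝ} {g : ℝ → ℂ} (hg : MemYhat η₀ g)
    (hg' : eLpNorm g ⊤ volume < ⊤) : Integrable g := by
  have hb : ∀ᵐ η : ℝ, ‖g η‖ ≤ Set.indicator (Set.Icc (-η₀) η₀) (fun _ => Y1norm g) η := by
    filter_upwards [ae_norm_le_Y1 g hg'] with η hη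
    by_cases hmem : η ∈ Set.Icc (-η₀) η₀
    · rw [Set.indicator_of_mem hmem]; exact hη
    · rw [Set.indicator_of_notMem hmem, hg.2 η (not_mem_Icc_abs hmem)]
      simp
  have hind : Integrable (Set.indicator (Set.Icc (-η₀) η₀) (fun _ => Y1norm g) : ℝ → ℝ) := by
    rw [integrable_indicator_iff measurableSet_Icc]
    exact integrableOn_const measure_Icc_lt_top.ne
  exact hind.mono' hg.1.aestronglyMeasurable hb

lemma sym_integrable {η₀ : ℝ} {g : ℝ → ℂ} (hg : MemYhat η₀ g)
    (hg' : eLpNorm g ⊤ volume < ⊤) {a : ℝ → ℝ} (ha : Measurable a)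
    {B : ℝ} (hB0 : 0 ≤ B) (hB : ∀ η, |η| ≤ η₀ → |a η| ≤ B) :
    Integrable (fun η => ((a η : ℝ) : ℂ) * g η) := by
  have hgi := memYhat_integrable hg hg'
  refine (hgi.norm.const_mul B).mono' ?_ ?_
  · exact (Complex.measurable_ofReal.comp ha).aestronglyMeasurable.mul
      hg.1.aestronglyMeasurable
  · refine Filter.Eventually.of_forall fun η => ?_
    rw [norm_mul, Complex.norm_real, Real.norm_eq_abs]
    rcases le_or_gt |η| η₀ with hc | hc
    · exact mul_le_mul_of_nonneg_right (hB η hc) (norm_nonneg _)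
    · rw [hg.2 η hc]
      simp [mul_nonneg hB0 (norm_nonneg (0:ℂ))]

lemma integrable_mul_e {f : ℝ → ℂ} (hf : Integrable f) (y : ℝ) :
    Integrable (fun η => f η * Complex.exp (Complex.I * ((η * y : ℝ) : ℂ))) := by
  refine hf.norm.mono' ?_ (Filter.Eventually.of_forall fun η => ?_)
  · exact hf.1.mul (Continuous.aestronglyMeasurable (by continuity))
  · rw [norm_mul, norm_cexp_I_mul, mul_one]

lemma master_bound (t η₀ : ℝ) (ht : 0 ≤ t) (h0 : 0 < η₀) (h1 : η₀ ≤ 1)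
    (h : ℝ → ℂ) (M : ℝ) (hM : 0 ≤ M)
    (hmeas : AEStronglyMeasurable h volume)
    (hb : ∀ᵐ η : ℝ, ‖h η‖ ≤ Set.indicator (Set.Icc (-η₀) η₀)
        (fun η => 4 * Real.exp (-(t * η ^ 2)) * M) η)
    (y : ℝ) : ‖invF h y‖ ≤ 12 * jb t ^ (-(1/2) : ℝ) * M := by
  have hbint : Integrable (Set.indicator (Set.Icc (-η₀) η₀)
      (fun η => 4 * Real.exp (-(t * η ^ 2)) * M) : ℝ → ℝ) := by
    rw [integrable_indicator_iff measurableSet_Icc]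
    exact (by continuity : Continuous fun η : ℝ =>
      4 * Real.exp (-(t * η ^ 2)) * M).continuousOn.integrableOn_compact isCompact_Icc
  have hint : Integrable h := hbint.mono' hmeas hb
  have step1 := norm_invF_le h y
  have step2 : ∫ η : ℝ, ‖h η‖ ≤ ∫ η : ℝ, Set.indicator (Set.Icc (-η₀) η₀)
      (fun η => 4 * Real.exp (-(t * η ^ 2)) * M) η :=
    integral_mono_ae hint.norm hbint hb
  have step3 : ∫ η : ℝ, Set.indicator (Set.Icc (-η₀) η₀)
      (fun η => 4 * Real.exp (-(t * η ^ 2)) * M) η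
      = 4 * M * ∫ η in Set.Icc (-η₀) η₀, Real.exp (-(t * η ^ 2)) := by
    rw [integral_indicator measurableSet_Icc]
    rw [show (fun η => 4 * Real.exp (-(t * η ^ 2)) * M)
      = fun η => (4 * M) * Real.exp (-(t * η ^ 2)) from funext fun η => by ring]
    exact integral_const_mul _ _
  have step4 := gauss_int_le t η₀ ht h0 h1
  have hrnn : (0:ℝ) ≤ jb t ^ (-(1/2):ℝ) := Real.rpow_nonneg (jb_pos t).le _
  have hs2 : (Real.sqrt (2 * Real.pi))⁻¹ ≤ 1 := by
    rw [inv_le_one_iff₀]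
    right
    rw [show (1:ℝ) = Real.sqrt 1 by simp]
    exact Real.sqrt_le_sqrt (by nlinarith [Real.pi_gt_three])
  have hnn : (0:ℝ) ≤ ∫ η : ℝ, ‖h η‖ := integral_nonneg fun η => norm_nonneg _
  calc ‖invF h y‖ ≤ (Real.sqrt (2 * Real.pi))⁻¹ * ∫ η : ℝ, ‖h η‖ := step1
    _ ≤ 1 * ∫ η : ℝ, ‖h η‖ := mul_le_mul_of_nonneg_right hs2 hnn
    _ = ∫ η : ℝ, ‖h η‖ := one_mul _
    _ ≤ 4 * M * ∫ η in Set.Icc (-η₀) η₀, Real.exp (-(t * η ^ 2)) := by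
        rw [← step3]; exact step2
    _ ≤ 4 * M * (3 * jb t ^ (-(1/2):ℝ)) :=
        mul_le_mul_of_nonneg_left step4 (by positivity)
    _ = 12 * jb t ^ (-(1/2):ℝ) * M := by ring

def cF : ℂ := ((Real.sqrt (2 * Real.pi) : ℝ) : ℂ)⁻¹

lemma invF_eq (g : ℝ → ℂ) (y : ℝ) :
    invF g y = cF * ∫ η : ℝ, g η * Complex.exp (Complex.I * ((η * y : ℝ) : ℂ)) := rfl

lemma norm_cF_le : ‖cF‖ ≤ 1 := by
  rw [cF, norm_inv, Complex.norm_real, Real.norm_eq_abs,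
    abs_of_nonneg (Real.sqrt_nonneg _), inv_le_one_iff₀]
  right
  have h2 := Real.sq_sqrt (show (0:ℝ) ≤ 2 * Real.pi by positivity)
  have h3 := Real.sqrt_nonneg (2 * Real.pi)
  nlinarith [Real.pi_gt_three]

lemma Wfun_shift (t z w : ℝ) :
    Wfun t (z - w) = Set.indicator (Set.Icc (z - t) (z + t)) (fun _ => (1:ℝ)/2) w := by
  unfold Wfun
  by_cases h : w ∈ Set.Icc (z - t) (z + t)
  · rw [Set.indicator_of_mem h]
    have hm : z - w ∈ Set.Icc (-t) t := by
      rw [Set.mem_Icc] at h ⊢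
      constructor <;> linarith [h.1, h.2]
    rw [Set.indicator_of_mem hm]
  · have hm : z - w ∉ Set.Icc (-t) t := by
      intro hc
      rw [Set.mem_Icc] at hc
      exact h (Set.mem_Icc.2 ⟨by linarith [hc.2], by linarith [hc.1]⟩)
    rw [Set.indicator_of_notMem h, Set.indicator_of_notMem hm]

lemma ae_ne_zero : ∀ᵐ η : ℝ, η ≠ 0 := by
  have h : {η : ℝ | ¬ η ≠ 0} = {0} := by ext x; simp
  rw [ae_iff, h]
  exact measure_singleton 0

lemma Wconv_eq (t η₀ : ℝ) (ht : 0 < t) (h0 : 0 < η₀) (g : ℝ → ℂ)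
    (hg : MemYhat η₀ g) (hg' : eLpNorm g ⊤ volume < ⊤) (z : ℝ) :
    ∫ w : ℝ, ((Wfun (4 * t) (z - w) : ℝ) : ℂ) * invF g w
      = invF (fun η => ((Real.sin (4 * t * η) / η : ℝ) : ℂ) * g η) z := by
  have hgi := memYhat_integrable hg hg'
  set F : ℝ × ℝ → ℂ := fun p =>
    ((Wfun (4 * t) (z - p.1) : ℝ) : ℂ) *
      (cF * (g p.2 * Complex.exp (Complex.I * ((p.2 * p.1 : ℝ) : ℂ)))) with hF
  have hWmeas : Measurable fun w : ℝ => Wfun (4 * t) (z - w) := by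
    unfold Wfun
    exact (measurable_const.indicator measurableSet_Icc).comp
      (measurable_const.sub measurable_id)
  have hFmeas : AEStronglyMeasurable F (volume.prod volume) := by
    refine AEStronglyMeasurable.mul ?_ ?_
    · exact ((Complex.measurable_ofReal.comp hWmeas).comp measurable_fst).aestronglyMeasurable
    · refine AEStronglyMeasurable.const_mul ?_ cF
      refine AEStronglyMeasurable.mul hg.1.aestronglyMeasurable.comp_snd ?_
      refine Continuous.aestronglyMeasurable ?_
      have : Continuous fun p : ℝ × ℝ => ((p.2 * p.1 : ℝ) : ℂ) := by continuity
      exact Complex.continuous_exp.comp (continuous_const.mul this)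
  have hWnn : ∀ u, 0 ≤ Wfun (4 * t) u := fun u =>
    Set.indicator_nonneg (fun _ _ => by norm_num) u
  have hWint : Integrable (fun w : ℝ => Wfun (4 * t) (z - w)) := by
    have heq : (fun w : ℝ => Wfun (4 * t) (z - w))
        = Set.indicator (Set.Icc (z - 4 * t) (z + 4 * t)) (fun _ => (1:ℝ)/2) :=
      funext fun w => Wfun_shift (4 * t) z w
    rw [heq, integrable_indicator_iff measurableSet_Icc]
    exact integrableOn_const measure_Icc_lt_top.ne
  have hFint : Integrable F (volume.prod volume) := by
    refine (hWint.mul_prod hgi.norm).mono' hFmeas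
      (Filter.Eventually.of_forall fun p => ?_)
    simp only [hF]
    calc ‖((Wfun (4 * t) (z - p.1) : ℝ) : ℂ) *
          (cF * (g p.2 * Complex.exp (Complex.I * ((p.2 * p.1 : ℝ) : ℂ))))‖
        = Wfun (4 * t) (z - p.1) * (‖cF‖ * ‖g p.2‖) := by
          rw [norm_mul, norm_mul, norm_mul, norm_cexp_I_mul, mul_one,
            Complex.norm_real, Real.norm_eq_abs, abs_of_nonneg (hWnn _)]
      _ ≤ Wfun (4 * t) (z - p.1) * (1 * ‖g p.2‖) :=
          mul_le_mul_of_nonneg_left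
            (mul_le_mul_of_nonneg_right norm_cF_le (norm_nonneg _)) (hWnn _)
      _ = Wfun (4 * t) (z - p.1) * ‖g p.2‖ := by rw [one_mul]
  have hswap : ∫ w : ℝ, ∫ η : ℝ, F (w, η) = ∫ η : ℝ, ∫ w : ℝ, F (w, η) :=
    integral_integral_swap hFint
  have hL : ∀ w : ℝ, ∫ η : ℝ, F (w, η) = ((Wfun (4 * t) (z - w) : ℝ) : ℂ) * invF g w := by
    intro w
    simp only [hF]
    rw [integral_const_mul, integral_const_mul, invF_eq]
  have hR : ∀ η : ℝ, η ≠ 0 → ∫ w : ℝ, F (w, η)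
      = cF * (((Real.sin (4 * t * η) / η : ℝ) : ℂ) * g η *
          Complex.exp (Complex.I * ((η * z : ℝ) : ℂ))) := by
    intro η hη
    have hη' : (η : ℂ) ≠ 0 := by exact_mod_cast hη
    have hstep : ∀ w : ℝ, F (w, η) = (cF * g η) *
        (((Wfun (4 * t) (z - w) : ℝ) : ℂ) *
          Complex.exp (Complex.I * ((η * w : ℝ) : ℂ))) := by
      intro w
      simp only [hF]
      ring
    rw [show (fun w : ℝ => F (w, η)) = fun w : ℝ => (cF * g η) *
        (((Wfun (4 * t) (z - w) : ℝ) : ℂ) *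
          Complex.exp (Complex.I * ((η * w : ℝ) : ℂ))) from funext hstep]
    rw [integral_const_mul]
    have hWe : ∫ w : ℝ, ((Wfun (4 * t) (z - w) : ℝ) : ℂ) *
        Complex.exp (Complex.I * ((η * w : ℝ) : ℂ))
        = ((Real.sin (4 * t * η) / η : ℝ) : ℂ) *
          Complex.exp (Complex.I * ((η * z : ℝ) : ℂ)) := by
      have h1 : ∀ w : ℝ, ((Wfun (4 * t) (z - w) : ℝ) : ℂ) *
          Complex.exp (Complex.I * ((η * w : ℝ) : ℂ))
          = Set.indicator (Set.Icc (z - 4 * t) (z + 4 * t))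
              (fun w => (1/2 : ℂ) * Complex.exp (Complex.I * ((η * w : ℝ) : ℂ))) w := by
        intro w
        rw [Wfun_shift]
        by_cases hm : w ∈ Set.Icc (z - 4 * t) (z + 4 * t)
        · rw [Set.indicator_of_mem hm, Set.indicator_of_mem hm]
          push_cast
          ring
        · rw [Set.indicator_of_notMem hm, Set.indicator_of_notMem hm]
          simp
      rw [show (fun w : ℝ => ((Wfun (4 * t) (z - w) : ℝ) : ℂ) *
          Complex.exp (Complex.I * ((η * w : ℝ) : ℂ)))
          = fun w : ℝ => Set.indicator (Set.Icc (z - 4 * t) (z + 4 * t))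
              (fun w => (1/2 : ℂ) * Complex.exp (Complex.I * ((η * w : ℝ) : ℂ))) w
          from funext h1]
      rw [integral_indicator measurableSet_Icc]
      have hab : z - 4 * t ≤ z + 4 * t := by linarith
      rw [integral_Icc_eq_integral_Ioc, ← intervalIntegral.integral_of_le hab]
      have h2 : ∀ w : ℝ, (1/2 : ℂ) * Complex.exp (Complex.I * ((η * w : ℝ) : ℂ))
          = (1/2 : ℂ) * Complex.exp ((Complex.I * (η:ℂ)) * (w:ℂ)) := by
        intro w
        push_cast
        ring_nf
      simp_rw [h2]
      rw [intervalIntegral.integral_const_mul]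
      rw [integral_exp_mul_complex (mul_ne_zero Complex.I_ne_zero hη')]
      have e1 : Complex.I * (η:ℂ) * ((z + 4 * t : ℝ):ℂ)
          = Complex.I * ((η * z : ℝ):ℂ) + ((4 * t * η : ℝ):ℂ) * Complex.I := by
        push_cast
        ring
      have e2 : Complex.I * (η:ℂ) * ((z - 4 * t : ℝ):ℂ)
          = Complex.I * ((η * z : ℝ):ℂ) + (-((4 * t * η : ℝ):ℂ)) * Complex.I := by
        push_cast
        ring
      rw [e1, e2, Complex.exp_add, Complex.exp_add, Complex.exp_mul_I, Complex.exp_mul_I]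
      rw [Complex.cos_neg, Complex.sin_neg]
      rw [← Complex.ofReal_cos, ← Complex.ofReal_sin]
      push_cast
      field_simp
      ring
    rw [hWe]
    ring
  have e1 : ∫ w : ℝ, ((Wfun (4 * t) (z - w) : ℝ) : ℂ) * invF g w
      = ∫ w : ℝ, ∫ η : ℝ, F (w, η) :=
    integral_congr_ae (Filter.Eventually.of_forall fun w => (hL w).symm)
  rw [e1, hswap]
  rw [integral_congr_ae (ae_ne_zero.mono fun η hη => hR η hη)]
  rw [integral_const_mul, invF_eq]

lemma Hker_pt (t η y x : ℝ) (ht : 0 < t) :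
    ((Hker (2 * t) x : ℝ):ℂ) * Complex.exp (Complex.I * ((η * (y - x) : ℝ):ℂ))
    = ((Real.sqrt (4 * Real.pi * (2 * t)) : ℝ):ℂ)⁻¹ *
        Complex.exp (Complex.I * ((η * y : ℝ):ℂ)) *
      (Complex.exp (Complex.I * (-(η:ℂ)) * (x:ℂ)) *
        Complex.exp (-((((8 * t)⁻¹ : ℝ)):ℂ) * (x:ℂ) ^ 2)) := by
  have htc : (t:ℂ) ≠ 0 := by exact_mod_cast ht.ne'
  unfold Hker
  rw [Complex.ofReal_mul, Complex.ofReal_exp, Complex.ofReal_inv]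
  rw [mul_assoc, ← Complex.exp_add, mul_assoc, ← Complex.exp_add, mul_assoc,
    ← Complex.exp_add]
  congr 1
  push_cast
  field_simp
  ring

lemma Hconv_eq (t : ℝ) (ht : 0 < t) (h : ℝ → ℂ) (hi : Integrable h) (y : ℝ) :
    ∫ z : ℝ, ((Hker (2 * t) (y - z) : ℝ) : ℂ) * invF h z
      = invF (fun η => ((Real.exp (-2 * t * η ^ 2) : ℝ) : ℂ) * h η) y := by
  have hHnn : ∀ u, 0 ≤ Hker (2 * t) u := fun u => by
    unfold Hker
    positivity
  have hHint : Integrable (fun u : ℝ => Hker (2 * t) u) := by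
    unfold Hker
    apply Integrable.const_mul
    have heq : ∀ u : ℝ, Real.exp (-u ^ 2 / (4 * (2 * t)))
        = Real.exp (-((8 * t)⁻¹) * u ^ 2) := by
      intro u
      congr 1
      have h8 : (4 * (2 * t)) = 8 * t := by ring
      rw [h8, div_eq_mul_inv]
      ring
    simp_rw [heq]
    exact integrable_exp_neg_mul_sq (by positivity)
  have hHyint : Integrable (fun z : ℝ => Hker (2 * t) (y - z)) :=
    (integrable_comp_sub_left (fun u => Hker (2 * t) u) y).2 hHint
  have hHcont : Continuous fun z : ℝ => Hker (2 * t) (y - z) := by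
    unfold Hker
    continuity
  set F : ℝ × ℝ → ℂ := fun p =>
    ((Hker (2 * t) (y - p.1) : ℝ) : ℂ) *
      (cF * (h p.2 * Complex.exp (Complex.I * ((p.2 * p.1 : ℝ) : ℂ)))) with hF
  have hFmeas : AEStronglyMeasurable F (volume.prod volume) := by
    refine AEStronglyMeasurable.mul ?_ ?_
    · exact ((Complex.continuous_ofReal.comp hHcont).comp continuous_fst).aestronglyMeasurable
    · refine AEStronglyMeasurable.const_mul ?_ cF
      refine AEStronglyMeasurable.mul hi.aestronglyMeasurable.comp_snd ?_
      refine Continuous.aestronglyMeasurable ?_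
      have : Continuous fun p : ℝ × ℝ => ((p.2 * p.1 : ℝ) : ℂ) := by continuity
      exact Complex.continuous_exp.comp (continuous_const.mul this)
  have hFint : Integrable F (volume.prod volume) := by
    refine (hHyint.mul_prod hi.norm).mono' hFmeas
      (Filter.Eventually.of_forall fun p => ?_)
    simp only [hF]
    calc ‖((Hker (2 * t) (y - p.1) : ℝ) : ℂ) *
          (cF * (h p.2 * Complex.exp (Complex.I * ((p.2 * p.1 : ℝ) : ℂ))))‖
        = Hker (2 * t) (y - p.1) * (‖cF‖ * ‖h p.2‖) := by
          rw [norm_mul, norm_mul, norm_mul, norm_cexp_I_mul, mul_one,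
            Complex.norm_real, Real.norm_eq_abs, abs_of_nonneg (hHnn _)]
      _ ≤ Hker (2 * t) (y - p.1) * (1 * ‖h p.2‖) :=
          mul_le_mul_of_nonneg_left
            (mul_le_mul_of_nonneg_right norm_cF_le (norm_nonneg _)) (hHnn _)
      _ = Hker (2 * t) (y - p.1) * ‖h p.2‖ := by rw [one_mul]
  have hswap : ∫ z : ℝ, ∫ η : ℝ, F (z, η) = ∫ η : ℝ, ∫ z : ℝ, F (z, η) :=
    integral_integral_swap hFint
  have hL : ∀ z : ℝ, ∫ η : ℝ, F (z, η) = ((Hker (2 * t) (y - z) : ℝ) : ℂ) * invF h z := by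
    intro z
    simp only [hF]
    rw [integral_const_mul, integral_const_mul, invF_eq]
  have hR : ∀ η : ℝ, ∫ z : ℝ, F (z, η)
      = cF * (((Real.exp (-2 * t * η ^ 2) : ℝ) : ℂ) * h η *
          Complex.exp (Complex.I * ((η * y : ℝ) : ℂ))) := by
    intro η
    have hstep : ∀ z : ℝ, F (z, η) = (cF * h η) *
        (((Hker (2 * t) (y - z) : ℝ) : ℂ) *
          Complex.exp (Complex.I * ((η * z : ℝ) : ℂ))) := by
      intro z
      simp only [hF]
      ring
    rw [show (fun z : ℝ => F (z, η)) = fun z : ℝ => (cF * h η) *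
        (((Hker (2 * t) (y - z) : ℝ) : ℂ) *
          Complex.exp (Complex.I * ((η * z : ℝ) : ℂ))) from funext hstep]
    rw [integral_const_mul]
    have hkey : ∫ z : ℝ, ((Hker (2 * t) (y - z) : ℝ):ℂ) *
        Complex.exp (Complex.I * ((η * z : ℝ):ℂ))
        = ((Real.exp (-2 * t * η ^ 2) : ℝ):ℂ) *
          Complex.exp (Complex.I * ((η * y : ℝ):ℂ)) := by
      have hsub : ∀ z : ℝ, ((Hker (2 * t) (y - z) : ℝ):ℂ) *
          Complex.exp (Complex.I * ((η * z : ℝ):ℂ))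
          = (fun x : ℝ => ((Hker (2 * t) x : ℝ):ℂ) *
              Complex.exp (Complex.I * ((η * (y - x) : ℝ):ℂ))) (y - z) := by
        intro z
        simp only [sub_sub_cancel]
      rw [show (fun z : ℝ => ((Hker (2 * t) (y - z) : ℝ):ℂ) *
          Complex.exp (Complex.I * ((η * z : ℝ):ℂ)))
          = fun z : ℝ => (fun x : ℝ => ((Hker (2 * t) x : ℝ):ℂ) *
              Complex.exp (Complex.I * ((η * (y - x) : ℝ):ℂ))) (y - z) from funext hsub]
      rw [integral_sub_left_eq_self (fun x : ℝ => ((Hker (2 * t) x : ℝ):ℂ) *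
              Complex.exp (Complex.I * ((η * (y - x) : ℝ):ℂ))) volume y]
      rw [show (fun x : ℝ => ((Hker (2 * t) x : ℝ):ℂ) *
              Complex.exp (Complex.I * ((η * (y - x) : ℝ):ℂ)))
          = fun x : ℝ => ((Real.sqrt (4 * Real.pi * (2 * t)) : ℝ):ℂ)⁻¹ *
              Complex.exp (Complex.I * ((η * y : ℝ):ℂ)) *
            (Complex.exp (Complex.I * (-(η:ℂ)) * (x:ℂ)) *
              Complex.exp (-((((8 * t)⁻¹ : ℝ)):ℂ) * (x:ℂ) ^ 2))
          from funext fun x => Hker_pt t η y x ht]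
      rw [integral_const_mul]
      rw [fourierIntegral_gaussian (by
        simp only [Complex.ofReal_re]
        positivity) (-(η:ℂ))]
      have hA : ((Real.pi : ℂ)) / ((((8 * t)⁻¹ : ℝ)):ℂ)
          = ((4 * Real.pi * (2 * t) : ℝ):ℂ) := by
        have htne : (t:ℝ) ≠ 0 := ht.ne'
        push_cast
        field_simp
        ring
      have hB : ((Real.pi : ℂ) / ((((8 * t)⁻¹ : ℝ)):ℂ)) ^ (1/2 : ℂ)
          = ((Real.sqrt (4 * Real.pi * (2 * t)) : ℝ):ℂ) := by
        rw [hA, show (1/2 : ℂ) = ((1/2 : ℝ):ℂ) by norm_num,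
          ← Complex.ofReal_cpow (by positivity) (1/2), ← Real.sqrt_eq_rpow]
      have hC : Complex.exp (-(-(η:ℂ)) ^ 2 / (4 * ((((8 * t)⁻¹ : ℝ)):ℂ)))
          = ((Real.exp (-2 * t * η ^ 2) : ℝ):ℂ) := by
        rw [Complex.ofReal_exp]
        congr 1
        have htne : (t:ℂ) ≠ 0 := by exact_mod_cast ht.ne'
        push_cast
        field_simp
        ring
      rw [hB, hC]
      have hcne : ((Real.sqrt (4 * Real.pi * (2 * t)) : ℝ):ℂ) ≠ 0 := by
        have : (0:ℝ) < Real.sqrt (4 * Real.pi * (2 * t)) :=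
          Real.sqrt_pos.2 (by positivity)
        exact_mod_cast this.ne'
      have hgen : ∀ a b c : ℂ, a ≠ 0 → a⁻¹ * b * (a * c) = c * b := by
        intro a b c ha
        field_simp
      exact hgen _ _ _ hcne
    rw [hkey]
    ring
  have e1 : ∫ z : ℝ, ((Hker (2 * t) (y - z) : ℝ) : ℂ) * invF h z
      = ∫ z : ℝ, ∫ η : ℝ, F (z, η) :=
    integral_congr_ae (Filter.Eventually.of_forall fun z => (hL z).symm)
  rw [e1, hswap]
  rw [integral_congr_ae (Filter.Eventually.of_forall hR)]
  rw [integral_const_mul, invF_eq]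


-- measurability of symbols
lemma omg_continuous : Continuous omg := Real.continuous_sqrt.comp (by continuity)

lemma cont_arg (t : ℝ) : Continuous fun η : ℝ => t * η * omg η :=
  (continuous_const.mul continuous_id).mul omg_continuous

lemma meas_exp_part (t : ℝ) : Measurable fun η : ℝ => Real.exp (-2 * t * η ^ 2) :=
  (Real.continuous_exp.comp (by continuity)).measurable

lemma meas_E11 (t : ℝ) : Measurable (E11 t) := by
  unfold E11
  exact (meas_exp_part t).mul
    (((Real.continuous_cos.comp (cont_arg t)).measurable).sub
      ((measurable_id.div omg_continuous.measurable).mul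
        (Real.continuous_sin.comp (cont_arg t)).measurable))

lemma meas_E12 (t : ℝ) : Measurable (E12 t) := by
  unfold E12
  exact (meas_exp_part t).mul
    ((((continuous_const.mul continuous_id).measurable.div
        omg_continuous.measurable).neg).mul
      (Real.continuous_sin.comp (cont_arg t)).measurable)

lemma meas_E21 (t : ℝ) : Measurable (E21 t) := by
  unfold E21
  exact (meas_exp_part t).mul
    ((((continuous_id.pow 2).add (omg_continuous.pow 2)).measurable.div
        ((continuous_const.mul continuous_id).mul omg_continuous).measurable).mul
      (Real.continuous_sin.comp (cont_arg t)).measurable)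

lemma meas_E22 (t : ℝ) : Measurable (E22 t) := by
  unfold E22
  exact (meas_exp_part t).mul
    (((Real.continuous_cos.comp (cont_arg t)).measurable).add
      ((measurable_id.div omg_continuous.measurable).mul
        (Real.continuous_sin.comp (cont_arg t)).measurable))

lemma meas_msym (t : ℝ) : Measurable (msym t) := by
  unfold msym
  exact (meas_exp_part t).mul
    ((Real.continuous_sin.comp (by continuity : Continuous fun η : ℝ => 4 * t * η)).measurable.div
      (continuous_const.mul continuous_id).measurable)

lemma abs_E21_le (t η : ℝ) (ht : 0 ≤ t) (hη : |η| ≤ 1) : |E21 t η| ≤ 2 + 2 * t := by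
  have h1 := abs_E21_sub_le t η ht hη
  have h2 := abs_msym_le t η ht
  have h3 : Real.exp (-(t * η ^ 2)) ≤ 1 := by
    rw [Real.exp_le_one_iff]
    nlinarith [sq_nonneg η]
  calc |E21 t η| = |(E21 t η - msym t η) + msym t η| := by ring_nf
    _ ≤ |E21 t η - msym t η| + |msym t η| := abs_add_le _ _
    _ ≤ 2 + 2 * t := by linarith

lemma convHW_repr (t η₀ : ℝ) (ht : 0 ≤ t) (h0 : 0 < η₀) (g : ℝ → ℂ)
    (hg : MemYhat η₀ g) (hg' : eLpNorm g ⊤ volume < ⊤) (y : ℝ) :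
    (1/2 : ℂ) * convHW t (invF g) y = invF (fun η => ((msym t η : ℝ) : ℂ) * g η) y := by
  rcases ht.eq_or_lt with rfl | ht'
  · have hH0 : ∀ u, Hker 0 u = 0 := by
      intro u
      unfold Hker
      norm_num
    have hm0 : ∀ η : ℝ, msym 0 η = 0 := by
      intro η
      unfold msym
      norm_num
    simp [convHW, hH0, hm0, invF]
  · have hgi := memYhat_integrable hg hg'
    have hsmeas : Measurable fun η : ℝ => Real.sin (4 * t * η) / η :=
      (Real.continuous_sin.comp
        (by continuity : Continuous fun η : ℝ => 4 * t * η)).measurable.div measurable_id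
    have hsb : ∀ η : ℝ, |η| ≤ η₀ → |Real.sin (4 * t * η) / η| ≤ 4 * t := by
      intro η _
      rcases eq_or_ne η 0 with rfl | hη
      · simp
        positivity
      · rw [abs_div, div_le_iff₀ (abs_pos.2 hη)]
        calc |Real.sin (4 * t * η)| ≤ |4 * t * η| := Real.abs_sin_le_abs
          _ = 4 * t * |η| := by
            rw [abs_mul, abs_mul, abs_of_nonneg ht, abs_of_nonneg (by norm_num : (0:ℝ) ≤ 4)]
    have hsymint : Integrable (fun η => ((Real.sin (4 * t * η) / η : ℝ) : ℂ) * g η) :=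
      sym_integrable hg hg' hsmeas (by positivity) hsb
    unfold convHW
    have hinner : ∀ z : ℝ,
        (∫ w : ℝ, ((Hker (2 * t) (y - z) * Wfun (4 * t) (z - w) : ℝ) : ℂ) * invF g w)
        = ((Hker (2 * t) (y - z) : ℝ) : ℂ) *
            invF (fun η => ((Real.sin (4 * t * η) / η : ℝ) : ℂ) * g η) z := by
      intro z
      rw [← Wconv_eq t η₀ ht' h0 g hg hg' z, ← integral_const_mul]
      congr 1
      funext w
      push_cast
      ring
    rw [show (fun z : ℝ =>
        ∫ w : ℝ, ((Hker (2 * t) (y - z) * Wfun (4 * t) (z - w) : ℝ) : ℂ) * invF g w)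
        = fun z : ℝ => ((Hker (2 * t) (y - z) : ℝ) : ℂ) *
            invF (fun η => ((Real.sin (4 * t * η) / η : ℝ) : ℂ) * g η) z
        from funext hinner]
    rw [Hconv_eq t ht' _ hsymint y]
    rw [invF_eq, invF_eq, ← mul_assoc, mul_comm (1/2 : ℂ) cF, mul_assoc,
      ← integral_const_mul]
    congr 1
    refine integral_congr_ae (Filter.Eventually.of_forall fun η => ?_)
    have hmr : msym t η = 1/2 * Real.exp (-2 * t * η ^ 2) * (Real.sin (4 * t * η) / η) := by
      unfold msym
      rw [div_mul_eq_div_div]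
      ring
    show (1/2 : ℂ) * (((Real.exp (-2 * t * η ^ 2) : ℝ) : ℂ) *
        (((Real.sin (4 * t * η) / η : ℝ) : ℂ) * g η) *
        Complex.exp (Complex.I * ((η * y : ℝ) : ℂ)))
      = ((msym t η : ℝ) : ℂ) * g η * Complex.exp (Complex.I * ((η * y : ℝ) : ℂ))
    rw [hmr]
    push_cast
    ring

lemma row2_sub (t η₀ : ℝ) (ht : 0 ≤ t) (h0 : 0 < η₀) (h1 : η₀ ≤ 1) (g₁ g₂ : ℝ → ℂ)
    (hg₁ : MemYhat η₀ g₁) (hg₂ : MemYhat η₀ g₂)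
    (hg₁' : eLpNorm g₁ ⊤ volume < ⊤) (hg₂' : eLpNorm g₂ ⊤ volume < ⊤) (y : ℝ) :
    row2 t g₁ g₂ y - (1/2 : ℂ) * convHW t (invF g₁) y
      = invF (fun η => ((E21 t η - msym t η : ℝ) : ℂ) * g₁ η
          + ((E22 t η : ℝ) : ℂ) * g₂ η) y := by
  have habs1 : ∀ η : ℝ, |η| ≤ η₀ → |E21 t η| ≤ 2 + 2 * t := fun η hη =>
    abs_E21_le t η ht (le_trans hη h1)
  have habs2 : ∀ η : ℝ, |η| ≤ η₀ → |E22 t η| ≤ 2 := by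
    intro η hη
    have := abs_E22_le t η ht (le_trans hη h1)
    have h3 : Real.exp (-(t * η ^ 2)) ≤ 1 := by
      rw [Real.exp_le_one_iff]
      nlinarith [sq_nonneg η]
    linarith
  have habs3 : ∀ η : ℝ, |η| ≤ η₀ → |msym t η| ≤ 2 * t := fun η _ => abs_msym_le t η ht
  have hI1 : Integrable (fun η => ((E21 t η : ℝ) : ℂ) * g₁ η) :=
    sym_integrable hg₁ hg₁' (meas_E21 t) (by positivity) habs1
  have hI2 : Integrable (fun η => ((E22 t η : ℝ) : ℂ) * g₂ η) :=
    sym_integrable hg₂ hg₂' (meas_E22 t) (by norm_num) habs2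
  have hI3 : Integrable (fun η => ((msym t η : ℝ) : ℂ) * g₁ η) :=
    sym_integrable hg₁ hg₁' (meas_msym t) (by positivity) habs3
  have hI12 : Integrable (fun η => ((E21 t η : ℝ) : ℂ) * g₁ η
      + ((E22 t η : ℝ) : ℂ) * g₂ η) := hI1.add hI2
  have hA : Integrable (fun η : ℝ => (((E21 t η : ℝ) : ℂ) * g₁ η
      + ((E22 t η : ℝ) : ℂ) * g₂ η) * Complex.exp (Complex.I * ((η * y : ℝ) : ℂ))) :=
    integrable_mul_e hI12 y
  have hB : Integrable (fun η : ℝ => (((msym t η : ℝ) : ℂ) * g₁ η) *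
      Complex.exp (Complex.I * ((η * y : ℝ) : ℂ))) :=
    integrable_mul_e hI3 y
  rw [convHW_repr t η₀ ht h0 g₁ hg₁ hg₁' y]
  unfold row2
  rw [invF_eq, invF_eq, invF_eq, ← mul_sub]
  congr 1
  rw [← integral_sub hA hB]
  refine integral_congr_ae (Filter.Eventually.of_forall fun η => ?_)
  push_cast
  ring

/-- Leading order asymptotics of `e^{t𝒜_*}(f₁,f₂)ᵀ`: it is approximated by
`(1/2)(H_{2t} * W_{4t} * f₁)·e₂` with error `O(⟨t⟩^{-1/2})` in `L^∞ × L^∞`. -/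
theorem etA_asymptotics_1 :
    ∃ η₁ : ℝ, 0 < η₁ ∧ ∀ η₀ : ℝ, 0 < η₀ → η₀ ≤ η₁ →
      ∃ C : ℝ, 0 < C ∧ ∀ t : ℝ, 0 ≤ t → ∀ g₁ g₂ : ℝ → ℂ,
        MemYhat η₀ g₁ → MemYhat η₀ g₂ →
        eLpNorm g₁ ⊤ volume < ⊤ → eLpNorm g₂ ⊤ volume < ⊤ →
        ∀ y : ℝ,
          ‖row1 t g₁ g₂ y‖ ≤ C * jb t ^ (-(1 / 2) : ℝ) * (Y1norm g₁ + Y1norm g₂) ∧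
          ‖row2 t g₁ g₂ y - (1 / 2 : ℂ) * convHW t (invF g₁) y‖
              ≤ C * jb t ^ (-(1 / 2) : ℝ) * (Y1norm g₁ + Y1norm g₂) := by
  refine ⟨1, one_pos, fun η₀ h0 h1 => ⟨12, by norm_num, fun t ht g₁ g₂ hg₁ hg₂ hg₁' hg₂' y => ?_⟩⟩
  have hMnn : 0 ≤ Y1norm g₁ + Y1norm g₂ :=
    add_nonneg (Y1norm_nonneg g₁) (Y1norm_nonneg g₂)
  have hae1 := ae_norm_le_Y1 g₁ hg₁'
  have hae2 := ae_norm_le_Y1 g₂ hg₂'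
  have key : ∀ a b : ℝ → ℝ, Measurable a → Measurable b →
      (∀ η : ℝ, |η| ≤ 1 → |a η| ≤ 2 * Real.exp (-(t * η ^ 2))) →
      (∀ η : ℝ, |η| ≤ 1 → |b η| ≤ 2 * Real.exp (-(t * η ^ 2))) →
      ‖invF (fun η => ((a η : ℝ) : ℂ) * g₁ η + ((b η : ℝ) : ℂ) * g₂ η) y‖
        ≤ 12 * jb t ^ (-(1 / 2) : ℝ) * (Y1norm g₁ + Y1norm g₂) := by
    intro a b ha hb hba hbb
    apply master_bound t η₀ ht h0 h1 _ _ hMnn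
    · exact ((Complex.measurable_ofReal.comp ha).aestronglyMeasurable.mul
        hg₁.1.aestronglyMeasurable).add
        ((Complex.measurable_ofReal.comp hb).aestronglyMeasurable.mul
          hg₂.1.aestronglyMeasurable)
    · filter_upwards [hae1, hae2] with η k1 k2
      by_cases hmem : η ∈ Set.Icc (-η₀) η₀
      · rw [Set.indicator_of_mem hmem]
        have hηa : |η| ≤ 1 := by
          rw [Set.mem_Icc] at hmem
          rw [abs_le]
          constructor <;> linarith [hmem.1, hmem.2]
        have b1 := hba η hηa
        have b2 := hbb η hηa
        have hexp := (Real.exp_pos (-(t * η ^ 2))).le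
        calc ‖((a η : ℝ) : ℂ) * g₁ η + ((b η : ℝ) : ℂ) * g₂ η‖
            ≤ ‖((a η : ℝ) : ℂ) * g₁ η‖ + ‖((b η : ℝ) : ℂ) * g₂ η‖ := norm_add_le _ _
          _ = |a η| * ‖g₁ η‖ + |b η| * ‖g₂ η‖ := by
              rw [norm_mul, norm_mul, Complex.norm_real, Complex.norm_real,
                Real.norm_eq_abs, Real.norm_eq_abs]
          _ ≤ (2 * Real.exp (-(t * η ^ 2))) * Y1norm g₁
              + (2 * Real.exp (-(t * η ^ 2))) * Y1norm g₂ := by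
              have n1 := norm_nonneg (g₁ η)
              have n2 := norm_nonneg (g₂ η)
              have a1 := abs_nonneg (a η)
              have a2 := abs_nonneg (b η)
              have y1 := Y1norm_nonneg g₁
              have y2 := Y1norm_nonneg g₂
              nlinarith
          _ ≤ 4 * Real.exp (-(t * η ^ 2)) * (Y1norm g₁ + Y1norm g₂) := by
              have y1 := Y1norm_nonneg g₁
              have y2 := Y1norm_nonneg g₂
              nlinarith
      · rw [Set.indicator_of_notMem hmem, hg₁.2 η (not_mem_Icc_abs hmem),
          hg₂.2 η (not_mem_Icc_abs hmem)]
        simp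
  constructor
  · unfold row1
    exact key (E11 t) (E12 t) (meas_E11 t) (meas_E12 t)
      (fun η hη => abs_E11_le t η ht hη) (fun η hη => abs_E12_le t η ht hη)
  · rw [row2_sub t η₀ ht h0 h1 g₁ g₂ hg₁ hg₂ hg₁' hg₂' y]
    exact key (fun η => E21 t η - msym t η) (E22 t)
      ((meas_E21 t).sub (meas_msym t)) (meas_E22 t)
      (fun η hη => abs_E21_sub_le t η ht hη) (fun η hη => abs_E22_le t η ht hη)
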